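/- Let D- be a canonical negative Boolean automaton double-cycle where the left cycle has odd size n ≥ 3 and the right cycle has size m = 1 (so c is its own right-cycle predecessor; f_c(x) = (¬x^ℓ_{n-1}) ∧ (¬x_c)). Then D- has exactly one irreversible configuration, namely ((10)^{(n-1)/2}1, 1), and the asynchronous transition graph has a unique attractor of size 2^n - 1. -/
import Mathlib


/-- One asynchronous update in a canonical negative double-cycle whose right
cycle has size 1: configurations are identified with the left cycle
`x ∈ {0,1}^n`, automaton 0 is the shared automaton `c` with
`f_c(x) = ¬x_{n-1} ∧ ¬x_0`, and every other automaton copies its predecessor. -/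
inductive Step1 (n : ℕ) : (Fin n → Bool) → (Fin n → Bool) → Prop
  | upd (x : Fin n → Bool) (i : Fin n) (hi : 1 ≤ i.val) :
      Step1 n x (Function.update x i (x ⟨i.val - 1, by have := i.isLt; omega⟩))
  | center (x : Fin n → Bool) (i : Fin n) (hi : i.val = 0) :
      Step1 n x (Function.update x i (!(x ⟨n - 1, by have := i.isLt; omega⟩) && !(x i)))

/-- `x` is irreversible: once any effective update is applied, `x` can never be
reached again. -/
def Irreversible (n : ℕ) (x : Fin n → Bool) : Prop :=
  ∀ x', Step1 n x x' → x' ≠ x → ¬ Relation.ReflTransGen (Step1 n) x' x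

/-- An attractor (terminal strongly connected component) of the asynchronous
transition graph: a nonempty set, closed under updates, whose configurations are
mutually reachable. -/
def IsAttractor1 (n : ℕ) (S : Set (Fin n → Bool)) : Prop :=
  S.Nonempty ∧ (∀ x ∈ S, ∀ y, Step1 n x y → y ∈ S) ∧
    ∀ x ∈ S, ∀ y ∈ S, Relation.ReflTransGen (Step1 n) x y

namespace Stmt17Aux
variable {n : ℕ}

def xstar (n : ℕ) : Fin n → Bool := fun i => decide (i.val % 2 = 0)

lemma bool_eq_not {a b : Bool} (h : a ≠ b) : a = !b := by cases a <;> cases b <;> simp_all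

lemma step_copy (x : Fin n → Bool) (k : ℕ) (hk : k + 1 < n) :
    Step1 n x (Function.update x ⟨k + 1, hk⟩ (x ⟨k, by omega⟩)) := by
  exact Step1.upd x ⟨k + 1, hk⟩ (by simp)

lemma step_write (x : Fin n → Bool) (h0 : 0 < n) :
    Step1 n x (Function.update x ⟨0, h0⟩ (!(x ⟨n - 1, by omega⟩) && !(x ⟨0, h0⟩))) := by
  exact Step1.center x ⟨0, h0⟩ rfl

lemma no_step_to_xstar (hn : 3 ≤ n) (hodd : n % 2 = 1) {x y : Fin n → Bool}
    (h : Step1 n x y) : y ≠ xstar n := by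
  cases h with
  | upd i hi =>
    intro he
    have h1 : Function.update x i (x ⟨i.val - 1, by have := i.isLt; omega⟩) i
        = x ⟨i.val - 1, by have := i.isLt; omega⟩ := Function.update_self _ _ _
    have hne : (⟨i.val - 1, by have := i.isLt; omega⟩ : Fin n) ≠ i := by
      simp only [ne_eq, Fin.ext_iff]; omega
    have h2 : Function.update x i (x ⟨i.val - 1, by have := i.isLt; omega⟩)
        ⟨i.val - 1, by have := i.isLt; omega⟩
        = x ⟨i.val - 1, by have := i.isLt; omega⟩ := Function.update_of_ne hne _ _
    rw [he] at h1 h2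
    rw [← h2] at h1
    simp only [xstar, decide_eq_decide] at h1
    omega
  | center i hi =>
    intro he
    have h1 : Function.update x i (!(x ⟨n - 1, by have := i.isLt; omega⟩) && !(x i)) i
        = (!(x ⟨n - 1, by have := i.isLt; omega⟩) && !(x i)) := Function.update_self _ _ _
    have hne : (⟨n - 1, by have := i.isLt; omega⟩ : Fin n) ≠ i := by
      simp only [ne_eq, Fin.ext_iff]; omega
    have h2 : Function.update x i (!(x ⟨n - 1, by have := i.isLt; omega⟩) && !(x i))
        ⟨n - 1, by have := i.isLt; omega⟩ = x ⟨n - 1, by have := i.isLt; omega⟩ :=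
      Function.update_of_ne hne _ _
    rw [he] at h1 h2
    have hx0 : xstar n i = true := by simp [xstar, hi]
    have hxn : xstar n ⟨n - 1, by omega⟩ = true := by
      simp only [xstar, decide_eq_true_eq]; omega
    rw [hxn] at h2
    rw [hx0, ← h2] at h1
    simp at h1

lemma eq_xstar_of_reach (hn : 3 ≤ n) (hodd : n % 2 = 1) {z : Fin n → Bool}
    (h : Relation.ReflTransGen (Step1 n) z (xstar n)) : z = xstar n := by
  induction h using Relation.ReflTransGen.head_induction_on with
  | refl => rfl
  | head hstep htail ih =>
    exact absurd ih (no_step_to_xstar hn hodd hstep)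

def flood (x : Fin n → Bool) (k : ℕ) : Fin n → Bool :=
  fun i => if i.val ≤ k then x ⟨0, i.pos⟩ else x i

lemma reach_flood (x : Fin n → Bool) (k : ℕ) (hk : k < n) :
    Relation.ReflTransGen (Step1 n) x (flood x k) := by
  induction k with
  | zero =>
    have : flood x 0 = x := by
      funext i
      simp only [flood]
      split_ifs with h
      · have : i = ⟨0, i.pos⟩ := Fin.ext (by simpa using h)
        rw [← this]
      · rfl
    rw [this]
  | succ k ih =>
    have hk' : k < n := by omega
    refine (ih hk').tail ?_
    have hstep := step_copy (flood x k) k hk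
    have he : Function.update (flood x k) ⟨k + 1, hk⟩ (flood x k ⟨k, by omega⟩)
        = flood x (k + 1) := by
      funext i
      rw [Function.update_apply]
      split_ifs with h
      · simp only [flood, Fin.ext_iff] at h ⊢
        rw [h]
        simp
      · simp only [flood, Fin.ext_iff] at h ⊢
        split_ifs with h1 h2 <;> first | rfl | omega
    rwa [he] at hstep

lemma reach_zero (hn : 3 ≤ n) (x : Fin n → Bool) :
    Relation.ReflTransGen (Step1 n) x (fun _ => false) := by
  have h0 : 0 < n := by omega
  have h1 : Relation.ReflTransGen (Step1 n) x (flood x (n - 1)) :=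
    reach_flood x (n - 1) (by omega)
  have huni : ∀ i : Fin n, flood x (n - 1) i = x ⟨0, h0⟩ := by
    intro i
    simp only [flood]
    rw [if_pos (by omega : i.val ≤ n - 1)]
  cases hb : x ⟨0, h0⟩ with
  | false =>
    have : flood x (n - 1) = fun _ => false := by
      funext i; rw [huni i, hb]
    rwa [this] at h1
  | true =>
    set u := flood x (n - 1) with hu
    have hw := step_write u h0
    set v := Function.update u ⟨0, h0⟩ (!(u ⟨n - 1, by omega⟩) && !(u ⟨0, h0⟩)) with hv
    have hv0 : v ⟨0, h0⟩ = false := by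
      rw [hv, Function.update_self, huni, huni, hb]
      simp
    have h2 : Relation.ReflTransGen (Step1 n) v (flood v (n - 1)) :=
      reach_flood v (n - 1) (by omega)
    have h3 : flood v (n - 1) = fun _ => false := by
      funext i
      simp only [flood]
      rw [if_pos (by omega : i.val ≤ n - 1), hv0]
    rw [h3] at h2
    exact (h1.tail hw).trans h2

def gcfg (y : Fin n → Bool) (k : ℕ) (hk : k < n) : Fin n → Bool :=
  fun i => if i.val < k then y ⟨k, hk⟩ else y i

lemma reach_g (hn : 3 ≤ n) (y : Fin n → Bool) (hy : y ⟨n - 1, by omega⟩ = false) :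
    ∀ d k (h : k + d = n - 1),
      Relation.ReflTransGen (Step1 n) (fun _ => false) (gcfg y k (by omega)) := by
  have h0 : 0 < n := by omega
  intro d
  induction d with
  | zero =>
    intro k h
    have hk : k = n - 1 := by omega
    subst hk
    have he : gcfg y (n - 1) (by omega) = (fun _ => false) := by
      funext i
      simp only [gcfg]
      split_ifs with h1
      · exact hy
      · have : i = ⟨n - 1, by omega⟩ := Fin.ext (by have := i.isLt; simp; omega)
        rw [this]; exact hy
    rw [he]
  | succ d ih =>
    intro k h
    have hk1 : k + 1 < n := by omega
    have ih' := ih (k + 1) (by omega)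
    refine ih'.trans ?_
    set g := gcfg y (k + 1) (by omega) with hgdef
    have hg0 : ∀ (p : 0 < n), g ⟨0, p⟩ = y ⟨k + 1, hk1⟩ := by
      intro p; simp only [hgdef, gcfg]; rw [if_pos (by simp)]
    have hgn : g ⟨n - 1, by omega⟩ = false := by
      simp only [hgdef, gcfg]; rw [if_neg (by simp; omega)]; exact hy
    have hghi : ∀ i : Fin n, k < i.val → g i = y i := by
      intro i hi; simp only [hgdef, gcfg]; rw [if_neg (by omega)]
    by_cases hb : y ⟨k, by omega⟩ = y ⟨k + 1, hk1⟩
    · have hf := reach_flood g k (by omega)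
      have he : flood g k = gcfg y k (by omega) := by
        funext i
        simp only [flood, gcfg]
        split_ifs with h1 h2
        · rw [hg0, ← hb]
        · have : i = ⟨k, by omega⟩ := Fin.ext (by simp; omega)
          rw [this, hg0, ← hb]
        · omega
        · exact hghi i (by omega)
      rwa [he] at hf
    · have hbk : y ⟨k, by omega⟩ = !(y ⟨k + 1, hk1⟩) := bool_eq_not hb
      have hw := step_write g h0
      set wv := (!(g ⟨n - 1, by omega⟩) && !(g ⟨0, h0⟩)) with hwv
      have hwvy : wv = y ⟨k, by omega⟩ := by
        rw [hwv, hgn, hg0, hbk]; simp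
      set w := Function.update g ⟨0, h0⟩ wv with hwdef
      have hw0 : ∀ (p : 0 < n), w ⟨0, p⟩ = y ⟨k, by omega⟩ := by
        intro p; rw [hwdef, Function.update_self, hwvy]
      have hwhi : ∀ i : Fin n, k < i.val → w i = y i := by
        intro i hi
        rw [hwdef, Function.update_of_ne (by simp only [ne_eq, Fin.ext_iff]; omega)]
        exact hghi i hi
      have hf := reach_flood w k (by omega)
      have he : flood w k = gcfg y k (by omega) := by
        funext i
        simp only [flood, gcfg]
        split_ifs with h1 h2
        · rw [hw0]
        · have : i = ⟨k, by omega⟩ := Fin.ext (by simp; omega)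
          rw [this, hw0]
        · omega
        · exact hwhi i (by omega)
      rw [he] at hf
      exact (Relation.ReflTransGen.single hw).trans hf

lemma reach_A (hn : 3 ≤ n) (y : Fin n → Bool) (hy : y ⟨n - 1, by omega⟩ = false) :
    Relation.ReflTransGen (Step1 n) (fun _ => false) y := by
  have h := reach_g hn y hy (n - 1) 0 (by omega)
  have he : gcfg y 0 (by omega) = y := by
    funext i; simp [gcfg]
  rwa [he] at h

lemma reach_pivot (hn : 3 ≤ n) :
    ∀ d p (h : p + d = n - 2) (y : Fin n → Bool),
      y ⟨p, by omega⟩ = y ⟨p + 1, by omega⟩ →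
      Relation.ReflTransGen (Step1 n) (fun _ => false) y := by
  intro d
  induction d with
  | zero =>
    intro p h y hpiv
    have hp : p = n - 2 := by omega
    subst hp
    by_cases hA : y ⟨n - 1, by omega⟩ = false
    · exact reach_A hn y hA
    · simp only [Bool.not_eq_false] at hA
      set z := Function.update y ⟨n - 1, by omega⟩ false with hzdef
      have hz : z ⟨n - 1, by omega⟩ = false := Function.update_self _ _ _
      have hr := reach_A hn z hz
      have hstep := step_copy z (n - 2) (by omega)
      refine hr.tail ?_
      have hidx : (⟨n - 2 + 1, by omega⟩ : Fin n) = ⟨n - 1, by omega⟩ :=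
        Fin.ext (by simp; omega)
      have hzp : z ⟨n - 2, by omega⟩ = y ⟨n - 1, by omega⟩ := by
        rw [hzdef, Function.update_of_ne (by simp only [ne_eq, Fin.ext_iff]; omega)]
        rw [hpiv, hidx]
      have he : Function.update z ⟨n - 2 + 1, by omega⟩ (z ⟨n - 2, by omega⟩) = y := by
        rw [hidx, hzp, hzdef, Function.update_idem, Function.update_eq_self]
      rw [← he]
      exact hstep
  | succ d ih =>
    intro p h y hpiv
    by_cases hA : y ⟨n - 1, by omega⟩ = false
    · exact reach_A hn y hA
    · by_cases h2 : y ⟨p + 1, by omega⟩ = y ⟨p + 1 + 1, by omega⟩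
      · exact ih (p + 1) (by omega) y h2
      · have hflip : y ⟨p + 1 + 1, by omega⟩ = !(y ⟨p + 1, by omega⟩) :=
          bool_eq_not (Ne.symm h2)
        set z := Function.update y ⟨p + 1, by omega⟩ (!(y ⟨p + 1, by omega⟩)) with hzdef
        have hz1 : z ⟨p + 1, by omega⟩ = !(y ⟨p + 1, by omega⟩) := Function.update_self _ _ _
        have hz2 : z ⟨p + 1 + 1, by omega⟩ = y ⟨p + 1 + 1, by omega⟩ := by
          rw [hzdef, Function.update_of_ne (by simp only [ne_eq, Fin.ext_iff]; omega)]
        have hpz : z ⟨p + 1, by omega⟩ = z ⟨p + 1 + 1, by omega⟩ := by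
          rw [hz1, hz2, hflip]
        have hr := ih (p + 1) (by omega) z hpz
        refine hr.tail ?_
        have hstep := step_copy z p (by omega)
        have hzp : z ⟨p, by omega⟩ = y ⟨p + 1, by omega⟩ := by
          rw [hzdef, Function.update_of_ne (by simp only [ne_eq, Fin.ext_iff]; omega)]
          exact hpiv
        have he : Function.update z ⟨p + 1, by omega⟩ (z ⟨p, by omega⟩) = y := by
          rw [hzp, hzdef, Function.update_idem, Function.update_eq_self]
        rw [← he]
        exact hstep

lemma reach_from_zero (hn : 3 ≤ n) (hodd : n % 2 = 1) (y : Fin n → Bool)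
    (hy : y ≠ xstar n) :
    Relation.ReflTransGen (Step1 n) (fun _ => false) y := by
  by_cases hA : y ⟨n - 1, by omega⟩ = false
  · exact reach_A hn y hA
  · simp only [Bool.not_eq_false] at hA
    by_cases hp : ∃ p, ∃ (_ : p + 2 ≤ n), y ⟨p, by omega⟩ = y ⟨p + 1, by omega⟩
    · obtain ⟨p, hpn, hpiv⟩ := hp
      exact reach_pivot hn (n - 2 - p) p (by omega) y hpiv
    · exfalso
      apply hy
      push_neg at hp
      have key : ∀ j, j ≤ n - 1 →
          y ⟨n - 1 - j, by omega⟩ = decide ((n - 1 - j) % 2 = 0) := by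
        intro j
        induction j with
        | zero =>
          intro _
          simp only [Nat.sub_zero]
          have hm : (n - 1) % 2 = 0 := by omega
          rw [hA]
          simp [hm]
        | succ j ihj =>
          intro hj1
          have ihv := ihj (by omega)
          have hpn : (n - 1 - (j + 1)) + 2 ≤ n := by omega
          have hne := hp (n - 1 - (j + 1)) hpn
          have hidx : (⟨n - 1 - (j + 1) + 1, by omega⟩ : Fin n) = ⟨n - 1 - j, by omega⟩ :=
            Fin.ext (by simp; omega)
          rw [hidx] at hne
          have hval : y ⟨n - 1 - (j + 1), by omega⟩ = !(decide ((n - 1 - j) % 2 = 0)) := by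
            rw [bool_eq_not hne, ihv]
          rcases Nat.mod_two_eq_zero_or_one (n - 1 - j) with h1 | h1
          · have h2 : (n - 1 - (j + 1)) % 2 = 1 := by omega
            rw [hval]
            simp [h1, h2]
          · have h2 : (n - 1 - (j + 1)) % 2 = 0 := by omega
            rw [hval]
            simp [h1, h2]
      funext i
      have hj := key (n - 1 - i.val) (by omega)
      have harg : n - 1 - (n - 1 - i.val) = i.val := by have := i.isLt; omega
      simp only [harg] at hj
      have hi2 : (⟨i.val, by omega⟩ : Fin n) = i := Fin.ext rfl
      rw [hi2] at hj
      rw [hj]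
      rfl

lemma reach_all (hn : 3 ≤ n) (hodd : n % 2 = 1) (x y : Fin n → Bool)
    (hy : y ≠ xstar n) : Relation.ReflTransGen (Step1 n) x y :=
  (reach_zero hn x).trans (reach_from_zero hn hodd y hy)

lemma exists_eff (hn : 3 ≤ n) (x : Fin n → Bool) :
    ∃ x', Step1 n x x' ∧ x' ≠ x := by
  have h0 : 0 < n := by omega
  by_cases hadj : ∃ k, ∃ (hk : k + 1 < n), x ⟨k + 1, hk⟩ ≠ x ⟨k, by omega⟩
  · obtain ⟨k, hk, hne⟩ := hadj
    refine ⟨_, step_copy x k hk, ?_⟩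
    intro he
    have h1 := congrFun he ⟨k + 1, hk⟩
    rw [Function.update_self] at h1
    exact hne h1.symm
  · push_neg at hadj
    have huni : ∀ v (hv : v < n), x ⟨v, hv⟩ = x ⟨0, h0⟩ := by
      intro v
      induction v with
      | zero => intro hv; rfl
      | succ v ihv =>
        intro hv
        rw [hadj v hv]
        exact ihv (by omega)
    refine ⟨_, step_write x h0, ?_⟩
    intro he
    have h1 := congrFun he ⟨0, h0⟩
    rw [Function.update_self] at h1
    rw [huni (n - 1) (by omega)] at h1
    cases hb : x ⟨0, h0⟩ <;> rw [hb] at h1 <;> simp at h1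

lemma mem_of_reach {T : Set (Fin n → Bool)}
    (hclT : ∀ x ∈ T, ∀ y, Step1 n x y → y ∈ T)
    {a b : Fin n → Bool} (ha : a ∈ T)
    (h : Relation.ReflTransGen (Step1 n) a b) : b ∈ T := by
  induction h with
  | refl => exact ha
  | tail hab hbc ih => exact hclT _ ih _ hbc

end Stmt17Aux

/-- For a canonical negative double-cycle with odd left-cycle size n ≥ 3 and
right cycle of size 1: the unique irreversible configuration is
((10)^{(n-1)/2}1, 1), and there is a unique attractor, of size 2^n - 1. -/
theorem stmt17 (n : ℕ) (hn : 3 ≤ n) (hodd : n % 2 = 1) :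
    (∀ x : Fin n → Bool,
      Irreversible n x ↔ x = fun i : Fin n => decide (i.val % 2 = 0)) ∧
    ∃ S : Set (Fin n → Bool), IsAttractor1 n S ∧ S.ncard = 2 ^ n - 1 ∧
      ∀ T : Set (Fin n → Bool), IsAttractor1 n T → T = S := by
  open Stmt17Aux in
  have h0 : 0 < n := by omega
  have hxs : (fun i : Fin n => decide (i.val % 2 = 0)) = Stmt17Aux.xstar n := rfl
  rw [hxs]
  constructor
  · intro x
    constructor
    · intro hIrr
      by_contra hx
      obtain ⟨x', hs, hne⟩ := Stmt17Aux.exists_eff hn x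
      exact hIrr x' hs hne (Stmt17Aux.reach_all hn hodd x' x hx)
    · rintro rfl
      intro x' hs hne hreach
      exact hne (Stmt17Aux.eq_xstar_of_reach hn hodd hreach)
  · refine ⟨{y | y ≠ Stmt17Aux.xstar n}, ⟨⟨(fun _ => false), ?_⟩, ?_, ?_⟩, ?_, ?_⟩
    · intro h
      have h1 := congrFun h ⟨0, h0⟩
      simp [Stmt17Aux.xstar] at h1
    · intro x _ y hstep
      exact Stmt17Aux.no_step_to_xstar hn hodd hstep
    · intro x _ y hy
      exact Stmt17Aux.reach_all hn hodd x y hy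
    · have hse : {y : Fin n → Bool | y ≠ Stmt17Aux.xstar n}
          = ({Stmt17Aux.xstar n} : Set (Fin n → Bool))ᶜ := by
        ext z; simp
      rw [hse]
      have hcompl := Set.ncard_add_ncard_compl ({Stmt17Aux.xstar n} : Set (Fin n → Bool))
      rw [Set.ncard_singleton] at hcompl
      have hcard : Nat.card (Fin n → Bool) = 2 ^ n := by
        rw [Nat.card_eq_fintype_card]
        simp
      rw [hcard] at hcompl
      omega
    · intro T hT
      obtain ⟨⟨t, ht⟩, hclT, hmutT⟩ := hT
      have hxsnot : Stmt17Aux.xstar n ∉ T := by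
        intro hmem
        have hstep := Stmt17Aux.step_write (Stmt17Aux.xstar n) h0
        have hyne := Stmt17Aux.no_step_to_xstar hn hodd hstep
        have hyT := hclT _ hmem _ hstep
        have hback := hmutT _ hyT _ hmem
        exact hyne (Stmt17Aux.eq_xstar_of_reach hn hodd hback)
      ext s
      simp only [Set.mem_setOf_eq]
      constructor
      · intro hs heq
        rw [heq] at hs
        exact hxsnot hs
      · intro hs
        have hreach := Stmt17Aux.reach_all hn hodd t s hs
        exact Stmt17Aux.mem_of_reach hclT ht hreach
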